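/- arXiv:2506.01870 — 3 statements merged into one kernel-verified Lean document; each statement's English description precedes it below -/
import Mathlib

section
/- The infinite series ∑_{k=0}^∞ (252k²-120k+5)·C(6k,3k) / ((2k-1)(6k-1)(6k-5)·4096^k) converges and equals -√3/2. -/
set_option maxHeartbeats 1000000

open Finset Filter Topology

noncomputable def bb (n : ℕ) : ℝ :=
  (Nat.centralBinom n : ℝ) / ((2 * (n : ℝ) - 1) * 16 ^ n)

lemma two_cast_ne (i : ℕ) : (2 * (i : ℝ) - 1) ≠ 0 := by
  rcases i with _ | i
  · norm_num
  · have h : (0 : ℝ) ≤ (i : ℝ) := Nat.cast_nonneg i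
    push_cast
    nlinarith

lemma cb_le_nat (n : ℕ) : Nat.centralBinom n ≤ 4 ^ n := by
  induction n with
  | zero => simp
  | succ m ih =>
    have h := Nat.succ_mul_centralBinom_succ m
    have h2 : (m + 1) * Nat.centralBinom (m + 1) ≤ (m + 1) * 4 ^ (m + 1) := by
      rw [h]
      calc 2 * (2 * m + 1) * Nat.centralBinom m ≤ 2 * (2 * m + 2) * 4 ^ m := by
            apply Nat.mul_le_mul (by omega) ih
        _ = (m + 1) * 4 ^ (m + 1) := by ring
    exact Nat.le_of_mul_le_mul_left h2 (by omega)

lemma cb_le (n : ℕ) : (Nat.centralBinom n : ℝ) ≤ 4 ^ n := by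
  exact_mod_cast cb_le_nat n

lemma bb_norm_le (n : ℕ) : ‖bb n‖ ≤ (1 / 4 : ℝ) ^ n := by
  rcases n with _ | m
  · norm_num [bb]
  · have hD : (1 : ℝ) ≤ 2 * ((m + 1 : ℕ) : ℝ) - 1 := by push_cast; linarith
    have h16 : (0 : ℝ) < (16 : ℝ) ^ (m + 1) := by positivity
    have hbnn : 0 ≤ bb (m + 1) := by
      unfold bb
      apply div_nonneg (Nat.cast_nonneg _)
      nlinarith
    rw [Real.norm_eq_abs, abs_of_nonneg hbnn]
    have h1 : bb (m + 1) ≤ (4 : ℝ) ^ (m + 1) / 16 ^ (m + 1) := by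
      unfold bb
      apply div_le_div₀ (by positivity) (cb_le _) (by nlinarith)
      nlinarith
    calc bb (m + 1) ≤ (4 : ℝ) ^ (m + 1) / 16 ^ (m + 1) := h1
      _ = (1 / 4 : ℝ) ^ (m + 1) := by
          rw [show (1 / 4 : ℝ) = 4 / 16 by norm_num, div_pow]

lemma bb_norm_summable : Summable (fun n => ‖bb n‖) := by
  apply Summable.of_nonneg_of_le (fun n => norm_nonneg _) bb_norm_le
  exact summable_geometric_of_lt_one (by norm_num) (by norm_num)

lemma bb_summable : Summable bb := bb_norm_summable.of_norm

lemma two_cast_ne' (i : ℕ) : (2 * (i : ℝ) - 1) ≠ 0 := by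
  rcases i with _ | i
  · norm_num
  · have h : (0 : ℝ) ≤ (i : ℝ) := Nat.cast_nonneg i
    push_cast
    nlinarith

lemma Ekey (n : ℕ) : ∀ m : ℕ, 1 ≤ m → m ≤ n →
    ∑ i ∈ range m, (Nat.centralBinom i : ℝ) * (Nat.centralBinom (n - i) : ℝ) / (2 * (i : ℝ) - 1)
      = -((m : ℝ) * (2 * (n : ℝ) - 2 * m + 1) / ((n : ℝ) * (2 * (m : ℝ) - 1)))
          * (Nat.centralBinom m : ℝ) * (Nat.centralBinom (n - m) : ℝ) := by
  intro m hm
  induction m, hm using Nat.le_induction with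
  | base =>
    intro hn
    obtain ⟨p, rfl⟩ : ∃ p, n = p + 1 := ⟨n - 1, by omega⟩
    have hrec : ((p : ℝ) + 1) * (Nat.centralBinom (p + 1) : ℝ)
        = 2 * (2 * p + 1) * (Nat.centralBinom p : ℝ) := by
      exact_mod_cast Nat.succ_mul_centralBinom_succ p
    rw [Finset.sum_range_one]
    have hps : p + 1 - 1 = p := by omega
    rw [hps, Nat.sub_zero]
    have hp1 : ((p : ℝ) + 1) ≠ 0 := by positivity
    have hc1 : (Nat.centralBinom 1 : ℝ) = 2 := by norm_num [Nat.centralBinom]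
    simp only [Nat.centralBinom_zero, hc1, Nat.cast_one]
    push_cast
    field_simp
    nlinarith [hrec]
  | succ m hm ih =>
    intro hmn
    have hmn' : m ≤ n := by omega
    obtain ⟨q, hq⟩ : ∃ q, n - m = q + 1 := ⟨n - m - 1, by omega⟩
    have hq2 : n - (m + 1) = q := by omega
    have hnR : (n : ℝ) = (m : ℝ) + (q : ℝ) + 1 := by
      have : n = m + q + 1 := by omega
      rw [this]; push_cast; ring
    rw [Finset.sum_range_succ, ih hmn', hq, hq2]
    have hrec1 : ((m : ℝ) + 1) * (Nat.centralBinom (m + 1) : ℝ)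
        = 2 * (2 * m + 1) * (Nat.centralBinom m : ℝ) := by
      exact_mod_cast Nat.succ_mul_centralBinom_succ m
    have hrec2 : ((q : ℝ) + 1) * (Nat.centralBinom (q + 1) : ℝ)
        = 2 * (2 * q + 1) * (Nat.centralBinom q : ℝ) := by
      exact_mod_cast Nat.succ_mul_centralBinom_succ q
    have hm1 : ((m : ℝ) + 1) ≠ 0 := by positivity
    have hq1 : ((q : ℝ) + 1) ≠ 0 := by positivity
    have hcm1 : (Nat.centralBinom (m + 1) : ℝ)
        = 2 * (2 * m + 1) * (Nat.centralBinom m : ℝ) / ((m : ℝ) + 1) := by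
      field_simp; linarith [hrec1]
    have hcq1 : (Nat.centralBinom (q + 1) : ℝ)
        = 2 * (2 * q + 1) * (Nat.centralBinom q : ℝ) / ((q : ℝ) + 1) := by
      field_simp; linarith [hrec2]
    rw [hcm1, hcq1, hnR]
    have h2m1 : (2 * (m : ℝ) - 1) ≠ 0 := two_cast_ne' m
    have h2m1' : (2 * ((m : ℝ) + 1) - 1) ≠ 0 := by
      have := two_cast_ne' (m + 1); push_cast at this; convert this using 2 <;> push_cast <;> ring
    have hmq1 : ((m : ℝ) + (q : ℝ) + 1) ≠ 0 := by positivity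
    push_cast
    have h2m1'' : (m : ℝ) * 2 - 1 ≠ 0 := by contrapose! h2m1; linarith
    field_simp
    ring

lemma E_zero (n : ℕ) (hn : 1 ≤ n) :
    ∑ i ∈ range (n + 1), (Nat.centralBinom i : ℝ) * (Nat.centralBinom (n - i) : ℝ) / (2 * (i : ℝ) - 1) = 0 := by
  rw [Finset.sum_range_succ, Ekey n n hn le_rfl, Nat.sub_self]
  simp only [Nat.centralBinom_zero, Nat.cast_one]
  have hn0 : ((n : ℝ)) ≠ 0 := by positivity  -- wrong: n cast could be 0? n ≥ 1
  have h2n : (2 * (n : ℝ) - 1) ≠ 0 := two_cast_ne' n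
  field_simp
  ring

lemma E_zero' (n : ℕ) (hn : 1 ≤ n) :
    ∑ i ∈ range (n + 1),
      (Nat.centralBinom i : ℝ) * (Nat.centralBinom (n - i) : ℝ) / (2 * ((n - i : ℕ) : ℝ) - 1) = 0 := by
  have h := Finset.sum_range_reflect
    (fun j => (Nat.centralBinom j : ℝ) * (Nat.centralBinom (n - j) : ℝ) / (2 * (j : ℝ) - 1)) (n + 1)
  rw [E_zero n hn] at h
  rw [← h]
  apply Finset.sum_congr rfl
  intro i hi
  have hi' : i ≤ n := by simp at hi; omega
  have h1 : n + 1 - 1 - i = n - i := by omega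
  have h2 : n - (n - i) = i := by omega
  rw [h1, h2]
  ring

lemma frac_split (x y A B P Q : ℝ) (hA : A ≠ 0) (hB : B ≠ 0) (hAB : A + B ≠ 0)
    (hP : P ≠ 0) (hQ : Q ≠ 0) :
    (x / (A * P)) * (y / (B * Q)) = (x * y / A + x * y / B) / ((A + B) * (P * Q)) := by
  field_simp
  ring

lemma Dn (n : ℕ) (hn : 2 ≤ n) :
    ∑ i ∈ range (n + 1), bb i * bb (n - i) = 0 := by
  have hkey : ∀ i ∈ range (n + 1), bb i * bb (n - i) =
      ((Nat.centralBinom i : ℝ) * (Nat.centralBinom (n - i) : ℝ) / (2 * (i : ℝ) - 1)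
        + (Nat.centralBinom i : ℝ) * (Nat.centralBinom (n - i) : ℝ) / (2 * ((n - i : ℕ) : ℝ) - 1))
        / ((2 * (n : ℝ) - 2) * 16 ^ n) := by
    intro i hi
    have hi' : i ≤ n := by simp at hi; omega
    have hpow : (16 : ℝ) ^ n = 16 ^ i * 16 ^ (n - i) := by
      rw [← pow_add]; congr 1; omega
    have hA : (2 * (i : ℝ) - 1) ≠ 0 := two_cast_ne' i
    have hB : (2 * ((n - i : ℕ) : ℝ) - 1) ≠ 0 := two_cast_ne' (n - i)
    have hsum : (2 * (i : ℝ) - 1) + (2 * ((n - i : ℕ) : ℝ) - 1) = 2 * (n : ℝ) - 2 := by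
      have : ((n - i : ℕ) : ℝ) = (n : ℝ) - (i : ℝ) := by
        rw [Nat.cast_sub hi']
      rw [this]; ring
    have hC : (2 * (n : ℝ) - 2) ≠ 0 := by
      have : (2 : ℝ) ≤ (n : ℝ) := by exact_mod_cast hn
      nlinarith
    have h16i : (16 : ℝ) ^ i ≠ 0 := by positivity
    have h16ni : (16 : ℝ) ^ (n - i) ≠ 0 := by positivity
    have hAB : (2 * (i : ℝ) - 1) + (2 * ((n - i : ℕ) : ℝ) - 1) ≠ 0 := by
      rw [hsum]; exact hC
    unfold bb
    rw [hpow, ← hsum]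
    exact frac_split _ _ _ _ _ _ hA hB hAB h16i h16ni
  rw [Finset.sum_congr rfl hkey, ← Finset.sum_div, Finset.sum_add_distrib,
    E_zero n (by omega), E_zero' n (by omega)]
  norm_num

lemma hD (n : ℕ) : ∑ kl ∈ Finset.HasAntidiagonal.antidiagonal n, bb kl.1 * bb kl.2
    = if n = 0 then (1 : ℝ) else if n = 1 then (-1/4 : ℝ) else 0 := by
  rw [Finset.Nat.sum_antidiagonal_eq_sum_range_succ_mk]
  match n with
  | 0 => norm_num [bb]
  | 1 =>
    have h0 : bb 0 = -1 := by norm_num [bb]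
    have h1 : bb 1 = 1 / 8 := by
      have : (Nat.centralBinom 1 : ℝ) = 2 := by norm_num [Nat.centralBinom]
      simp [bb, this]; norm_num
    norm_num [Finset.sum_range_succ, h0, h1]
  | (m + 2) => simpa using Dn (m + 2) (by omega)

lemma L_eq : ∑' n, bb n = -(Real.sqrt 3 / 2) := by
  have hprod : Summable fun x : ℕ × ℕ => bb x.1 * bb x.2 :=
    summable_mul_of_summable_norm bb_norm_summable bb_norm_summable
  have hmul := Summable.tsum_mul_tsum_eq_tsum_sum_antidiagonal bb_summable bb_summable hprod
  set L := ∑' n, bb n with hL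
  have hRHS : (∑' n : ℕ, ∑ kl ∈ Finset.HasAntidiagonal.antidiagonal n, bb kl.1 * bb kl.2) = 3 / 4 := by
    rw [tsum_congr hD]
    rw [tsum_eq_sum (s := ({0, 1} : Finset ℕ)) (by intro b hb; simp at hb; simp [hb.1, hb.2])]
    norm_num
  have hLL : L * L = 3 / 4 := by rw [hmul, hRHS]
  -- negativity
  have hshift : Summable fun n => bb (n + 1) := by
    exact_mod_cast (summable_nat_add_iff (f := bb) 1).mpr bb_summable
  have hgeo : Summable fun n : ℕ => (1/4 : ℝ) ^ (n + 1) := by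
    have h := (summable_geometric_of_lt_one (by norm_num) (by norm_num : (1/4 : ℝ) < 1)).mul_right (1/4 : ℝ)
    apply h.congr
    intro n
    rw [pow_succ]
  have htail : (∑' n, bb (n + 1)) ≤ ∑' n : ℕ, (1/4 : ℝ) ^ (n + 1) := by
    apply Summable.tsum_le_tsum _ hshift hgeo
    intro n
    exact le_trans (le_abs_self _) (bb_norm_le (n + 1))
  have hgeoval : (∑' n : ℕ, (1/4 : ℝ) ^ (n + 1)) = 1 / 3 := by
    have h := tsum_geometric_of_lt_one (by norm_num : (0:ℝ) ≤ 1/4) (by norm_num : (1/4 : ℝ) < 1)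
    calc (∑' n : ℕ, (1/4 : ℝ) ^ (n + 1)) = ∑' n : ℕ, (1/4 : ℝ) ^ n * (1/4) := by
          apply tsum_congr; intro n; rw [pow_succ]
      _ = (∑' n : ℕ, (1/4 : ℝ) ^ n) * (1/4) := by rw [tsum_mul_right]
      _ = 1 / 3 := by rw [h]; norm_num
  have hzeroadd : L = bb 0 + ∑' n, bb (n + 1) := Summable.tsum_eq_zero_add bb_summable
  have hb0 : bb 0 = -1 := by norm_num [bb]
  have hLneg : L < 0 := by
    rw [hzeroadd, hb0]
    have := htail.trans_eq hgeoval
    linarith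
  have h3 : Real.sqrt 3 ^ 2 = 3 := Real.sq_sqrt (by norm_num)
  have hsn : 0 ≤ Real.sqrt 3 := Real.sqrt_nonneg 3
  have hfac : (L + Real.sqrt 3 / 2) * (L - Real.sqrt 3 / 2) = 0 := by nlinarith
  rcases mul_eq_zero.mp hfac with h | h
  · linarith
  · nlinarith

lemma bb_hasSum : HasSum bb (-(Real.sqrt 3 / 2)) := by
  rw [← L_eq]; exact bb_summable.hasSum

lemma alg (t x y z p : ℝ) (ht : 0 ≤ t) (hp : p ≠ 0)
    (r1 : (3 * t + 2) * y = 2 * (2 * (3 * t + 1) + 1) * x)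
    (r2 : (3 * t + 3) * z = 2 * (2 * (3 * t + 2) + 1) * y) :
    (252 * (t + 1) ^ 2 - 120 * (t + 1) + 5) * z /
        ((2 * (t + 1) - 1) * (6 * (t + 1) - 1) * (6 * (t + 1) - 5) * (p * 4096))
      = x / ((2 * (3 * t + 1) - 1) * (p * 16)) + y / ((2 * (3 * t + 2) - 1) * (p * 256))
        + z / ((2 * (3 * t + 3) - 1) * (p * 4096)) := by
  have h32 : (3 * t + 2) ≠ 0 := by positivity
  have h33 : (3 * t + 3) ≠ 0 := by positivity
  have hy : y = 2 * (2 * (3 * t + 1) + 1) * x / (3 * t + 2) := by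
    field_simp; linarith
  have hz : z = 2 * (2 * (3 * t + 2) + 1) * (2 * (2 * (3 * t + 1) + 1) * x / (3 * t + 2)) / (3 * t + 3) := by
    rw [← hy]; field_simp; linarith
  rw [hz, hy]
  have d1 : (2 * (t + 1) - 1) ≠ 0 := by nlinarith
  have d2 : (6 * (t + 1) - 1) ≠ 0 := by nlinarith
  have d3 : (6 * (t + 1) - 5) ≠ 0 := by nlinarith
  have d4 : (2 * (3 * t + 1) - 1) ≠ 0 := by nlinarith
  have d5 : (2 * (3 * t + 2) - 1) ≠ 0 := by nlinarith
  have d6 : (2 * (3 * t + 3) - 1) ≠ 0 := by nlinarith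
  have d1' : ((t + 1) * 2 - 1) ≠ 0 := by nlinarith
  have d2' : ((t + 1) * 6 - 1) ≠ 0 := by nlinarith
  have d3' : ((t + 1) * 6 - 5) ≠ 0 := by nlinarith
  have d4' : (2 * (t * 3 + 1) - 1) ≠ 0 := by nlinarith
  have d5' : (2 * (t * 3 + 2) - 1) ≠ 0 := by nlinarith
  have d6' : ((t + 1) * 2 * 3 - 1) ≠ 0 := by nlinarith
  field_simp
  ring

noncomputable def aa (k : ℕ) : ℝ :=
  (252 * (k : ℝ) ^ 2 - 120 * k + 5) * (Nat.choose (6 * k) (3 * k)) /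
    ((2 * (k : ℝ) - 1) * (6 * k - 1) * (6 * k - 5) * 4096 ^ k)

lemma aa_zero : aa 0 = bb 0 := by norm_num [aa, bb]

lemma choose_eq_cb (k : ℕ) : Nat.choose (6 * k) (3 * k) = Nat.centralBinom (3 * k) := by
  rw [Nat.centralBinom]; congr 1; omega

lemma aa_succ (j : ℕ) : aa (j + 1) = bb (3 * j + 1) + bb (3 * j + 2) + bb (3 * j + 3) := by
  have r1 : (3 * (j:ℝ) + 2) * (Nat.centralBinom (3 * j + 2) : ℝ)
      = 2 * (2 * (3 * (j:ℝ) + 1) + 1) * (Nat.centralBinom (3 * j + 1) : ℝ) := by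
    have := Nat.succ_mul_centralBinom_succ (3 * j + 1)
    have h2 : (((3 * j + 1 + 1) * Nat.centralBinom (3 * j + 1 + 1) : ℕ) : ℝ)
        = ((2 * (2 * (3 * j + 1) + 1) * Nat.centralBinom (3 * j + 1) : ℕ) : ℝ) := by
      exact congrArg Nat.cast this
    push_cast at h2
    convert h2 using 2 <;> push_cast <;> ring
  have r2 : (3 * (j:ℝ) + 3) * (Nat.centralBinom (3 * j + 3) : ℝ)
      = 2 * (2 * (3 * (j:ℝ) + 2) + 1) * (Nat.centralBinom (3 * j + 2) : ℝ) := by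
    have := Nat.succ_mul_centralBinom_succ (3 * j + 2)
    have h2 : (((3 * j + 2 + 1) * Nat.centralBinom (3 * j + 2 + 1) : ℕ) : ℝ)
        = ((2 * (2 * (3 * j + 2) + 1) * Nat.centralBinom (3 * j + 2) : ℕ) : ℝ) := by
      exact congrArg Nat.cast this
    push_cast at h2
    convert h2 using 2 <;> push_cast <;> ring
  have hP : (16 : ℝ) ^ (3 * j) ≠ 0 := by positivity
  have halg := alg (j:ℝ) (Nat.centralBinom (3 * j + 1) : ℝ) (Nat.centralBinom (3 * j + 2) : ℝ)
    (Nat.centralBinom (3 * j + 3) : ℝ) ((16 : ℝ) ^ (3 * j)) (Nat.cast_nonneg j) hP r1 r2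
  have hch : (Nat.choose (6 * (j + 1)) (3 * (j + 1)) : ℝ) = (Nat.centralBinom (3 * j + 3) : ℝ) := by
    rw [choose_eq_cb, show 3 * (j + 1) = 3 * j + 3 from by omega]
  have e0 : (4096 : ℝ) ^ (j + 1) = 16 ^ (3 * j) * 4096 := by
    rw [show (4096 : ℝ) = 16 ^ 3 by norm_num, ← pow_mul]
    rw [show 3 * (j + 1) = 3 * j + 3 by ring, pow_add]
  have e1 : (16 : ℝ) ^ (3 * j + 1) = 16 ^ (3 * j) * 16 := by rw [pow_succ]
  have e2 : (16 : ℝ) ^ (3 * j + 2) = 16 ^ (3 * j) * 256 := by rw [pow_add]; norm_num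
  have e3 : (16 : ℝ) ^ (3 * j + 3) = 16 ^ (3 * j) * 4096 := by rw [pow_add]; norm_num
  unfold aa bb
  rw [hch, e0, e1, e2, e3]
  push_cast
  linear_combination halg

lemma aa_partial (K : ℕ) : ∑ k ∈ range (K + 1), aa k = ∑ n ∈ range (3 * K + 1), bb n := by
  induction K with
  | zero => simpa using aa_zero
  | succ K ih =>
    have hexp : ∑ n ∈ range (3 * (K + 1) + 1), bb n
        = ∑ n ∈ range (3 * K + 1), bb n + bb (3 * K + 1) + bb (3 * K + 2) + bb (3 * K + 3) := by
      rw [show 3 * (K + 1) + 1 = (3 * K + 1) + 1 + 1 + 1 from by omega]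
      rw [Finset.sum_range_succ (n := (3 * K + 1) + 1 + 1)]
      rw [Finset.sum_range_succ (n := (3 * K + 1) + 1)]
      rw [Finset.sum_range_succ (n := 3 * K + 1)]
    rw [Finset.sum_range_succ, ih, aa_succ K, hexp]
    linarith

lemma aa_norm_summable : Summable (fun k => ‖aa k‖) := by
  rw [← summable_nat_add_iff 1]
  refine Summable.of_nonneg_of_le (fun n => norm_nonneg _) (fun j => ?_)
    (((summable_geometric_of_lt_one (by norm_num) (by norm_num : (1/64 : ℝ) < 1))).mul_left (3 * (1/4 : ℝ)))
  · rw [aa_succ j]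
    have h1 := bb_norm_le (3 * j + 1)
    have h2 := bb_norm_le (3 * j + 2)
    have h3 := bb_norm_le (3 * j + 3)
    have key : ∀ c : ℕ, 1 ≤ c → ((1/4 : ℝ)) ^ (3 * j + c) ≤ (1/4) * (1/64) ^ j := by
      intro c hc
      have : ((1/4 : ℝ)) ^ (3 * j + c) ≤ (1/4) ^ (3 * j + 1) := by
        apply pow_le_pow_of_le_one (by norm_num) (by norm_num)
        omega
      calc ((1/4 : ℝ)) ^ (3 * j + c) ≤ (1/4) ^ (3 * j + 1) := this
        _ = (1/4) * (1/64) ^ j := by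
            rw [pow_succ, pow_mul]
            norm_num
            ring
    calc ‖bb (3 * j + 1) + bb (3 * j + 2) + bb (3 * j + 3)‖
        ≤ ‖bb (3 * j + 1)‖ + ‖bb (3 * j + 2)‖ + ‖bb (3 * j + 3)‖ := by
          apply le_trans (norm_add_le _ _)
          gcongr
          exact norm_add_le _ _
      _ ≤ 3 * (1/4 : ℝ) * (1/64) ^ j := by
          have k1 := key 1 (by norm_num)
          have k2 := key 2 (by norm_num)
          have k3 := key 3 (by norm_num)
          linarith

theorem series_stmt_3' : HasSum aa (-(Real.sqrt 3 / 2)) := by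
  rw [hasSum_iff_tendsto_nat_of_summable_norm aa_norm_summable]
  have ht := bb_hasSum.tendsto_sum_nat
  have h3K : Tendsto (fun K : ℕ => 3 * K + 1) atTop atTop := by
    apply tendsto_atTop_mono (fun K => by omega : ∀ K : ℕ, K ≤ 3 * K + 1)
    exact tendsto_id
  have h2 : Tendsto (fun K : ℕ => ∑ k ∈ range (K + 1), aa k) atTop (𝓝 (-(Real.sqrt 3 / 2))) := by
    have := ht.comp h3K
    apply Tendsto.congr _ this
    intro K
    exact (aa_partial K).symm
  exact (tendsto_add_atTop_iff_nat 1).mp h2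

theorem series_stmt_3 :
    HasSum (fun k : ℕ =>
      (252 * (k : ℝ) ^ 2 - 120 * k + 5) * (Nat.choose (6 * k) (3 * k)) /
        ((2 * (k : ℝ) - 1) * (6 * k - 1) * (6 * k - 5) * 4096 ^ k))
      (-(Real.sqrt 3 / 2)) := by
  exact series_stmt_3'
end

section
/- The infinite series ∑_{k=0}^∞ (63k²+18k+2)·8^k / ((6k+1)·C(6k,3k)) converges and equals 3π/2 + 4. -/
open MeasureTheory Real Set

noncomputable def myF (k : ℕ) (x : ℝ) : ℝ :=
  (63 * (k : ℝ) ^ 2 + 18 * k + 2) * 8 ^ k * (x ^ (3 * k) * (1 - x) ^ (3 * k))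

noncomputable def myf (x : ℝ) : ℝ :=
  47 / (1 - 8 * (x * (1 - x)) ^ 3) - 171 / (1 - 8 * (x * (1 - x)) ^ 3) ^ 2
    + 126 / (1 - 8 * (x * (1 - x)) ^ 3) ^ 3

lemma denom_pos (x : ℝ) : 0 < 1 - 8 * (x * (1 - x)) ^ 3 := by
  nlinarith [sq_nonneg (2 * x - 1), sq_nonneg (2 * x * (1 - x) + 1 / 4),
    mul_nonneg (mul_nonneg (sq_nonneg (2 * x - 1)) (sq_nonneg (2 * x - 1))) (sq_nonneg (2 * x - 1)),
    sq_nonneg (x * (1 - x))]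

lemma prod_fact (m n : ℕ) :
    m.factorial * ∏ j ∈ Finset.range (n + 1), (m + 1 + j) = (m + n + 1).factorial := by
  induction n with
  | zero => simp [Nat.factorial_succ, mul_comm]
  | succ n ih =>
      rw [Finset.prod_range_succ, ← mul_assoc, ih]
      have h1 : m + (n + 1) + 1 = (m + n + 1) + 1 := by omega
      rw [h1]
      conv_rhs => rw [Nat.factorial_succ]
      ring

lemma beta_nat (m n : ℕ) :
    ∫ x in (0:ℝ)..1, x ^ m * (1 - x) ^ n
      = (m.factorial * n.factorial : ℝ) / (m + n + 1).factorial := by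
  have hu : 0 < Complex.re ((m : ℂ) + 1) := by simp; positivity
  have h := Complex.betaIntegral_eval_nat_add_one_right hu n
  rw [Complex.betaIntegral] at h
  simp only [add_sub_cancel_right] at h
  have heq : ∀ x : ℝ, (x : ℂ) ^ (m : ℂ) * (1 - (x : ℂ)) ^ (n : ℂ)
      = ((x ^ m * (1 - x) ^ n : ℝ) : ℂ) := by
    intro x
    rw [Complex.cpow_natCast, Complex.cpow_natCast]
    push_cast
    ring
  rw [intervalIntegral.integral_congr (fun x _ => heq x)] at h
  rw [intervalIntegral.integral_ofReal] at h
  have hprod : (∏ j ∈ Finset.range (n + 1), ((m : ℂ) + 1 + j))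
      = ((∏ j ∈ Finset.range (n + 1), (m + 1 + j) : ℕ) : ℂ) := by
    push_cast
    ring
  rw [hprod] at h
  have keyn : n.factorial * (m + n + 1).factorial
      = m.factorial * n.factorial * ∏ j ∈ Finset.range (n + 1), (m + 1 + j) := by
    rw [← prod_fact m n]; ring
  have hP : ((∏ j ∈ Finset.range (n + 1), (m + 1 + j) : ℕ) : ℂ) ≠ 0 := by
    rw [Nat.cast_ne_zero]
    exact Finset.prod_ne_zero_iff.2 fun j _ => by omega
  have hq : (((m + n + 1).factorial : ℕ) : ℂ) ≠ 0 := by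
    exact_mod_cast Nat.factorial_ne_zero _
  have h2 : ((∫ x in (0:ℝ)..1, x ^ m * (1 - x) ^ n : ℝ) : ℂ)
      = ((m.factorial * n.factorial : ℝ) / (m + n + 1).factorial : ℝ) := by
    rw [h, Complex.ofReal_div]
    push_cast
    rw [hprod, div_eq_div_iff hP hq]
    exact_mod_cast keyn
  exact_mod_cast h2

lemma term_integral (k : ℕ) :
    ∫ x in (0:ℝ)..1, myF k x
      = (63 * (k : ℝ) ^ 2 + 18 * k + 2) * 8 ^ k /
          ((6 * (k : ℝ) + 1) * (Nat.choose (6 * k) (3 * k))) := by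
  have hb := beta_nat (3 * k) (3 * k)
  have h1 : ∫ x in (0:ℝ)..1, myF k x
      = (63 * (k : ℝ) ^ 2 + 18 * k + 2) * 8 ^ k *
          (((3 * k).factorial * (3 * k).factorial : ℝ) / (3 * k + 3 * k + 1).factorial) := by
    rw [← hb, ← intervalIntegral.integral_const_mul]
    rfl
  rw [h1]
  have hc : (Nat.choose (6 * k) (3 * k)) * (3 * k).factorial * (3 * k).factorial
      = (6 * k).factorial := by
    have h := Nat.choose_mul_factorial_mul_factorial (show 3 * k ≤ 6 * k by omega)
    rw [show 6 * k - 3 * k = 3 * k by omega] at h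
    exact h
  have hidx : 3 * k + 3 * k + 1 = 6 * k + 1 := by omega
  rw [hidx, Nat.factorial_succ]
  have hC : (0:ℝ) < (Nat.choose (6 * k) (3 * k) : ℝ) := by
    exact_mod_cast Nat.choose_pos (show 3 * k ≤ 6 * k by omega)
  have hf1 : ((3 * k).factorial : ℝ) ≠ 0 := by exact_mod_cast Nat.factorial_ne_zero _
  have hf2 : ((6 * k).factorial : ℝ) ≠ 0 := by exact_mod_cast Nat.factorial_ne_zero _
  have h6 : (0:ℝ) < 6 * (k:ℝ) + 1 := by positivity
  have hcR : (Nat.choose (6 * k) (3 * k) : ℝ) * (3 * k).factorial * (3 * k).factorial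
      = ((6 * k).factorial : ℝ) := by exact_mod_cast hc
  push_cast
  have hCne : ((6 * k).choose (3 * k) : ℝ) ≠ 0 := hC.ne'
  have h6ne : (6 * (k:ℝ) + 1) ≠ 0 := h6.ne'
  field_simp
  linear_combination hcR

lemma summable_a : Summable (fun k : ℕ =>
    (63 * (k : ℝ) ^ 2 + 18 * k + 2) * 8 ^ k /
      ((6 * (k : ℝ) + 1) * (Nat.choose (6 * k) (3 * k)))) := by
  have hbig : ∀ k : ℕ, (64:ℝ) ^ k ≤ (6 * (k:ℝ) + 1) * (Nat.choose (6 * k) (3 * k)) := by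
    intro k
    rcases Nat.eq_zero_or_pos k with rfl | hk
    · norm_num
    · have h := Nat.four_pow_le_two_mul_self_mul_centralBinom (3 * k) (by omega)
      rw [Nat.centralBinom, show 2 * (3 * k) = 6 * k by ring] at h
      have h2 : 4 ^ (3 * k) ≤ (6 * k + 1) * Nat.choose (6 * k) (3 * k) := by
        calc 4 ^ (3 * k) ≤ 6 * k * Nat.choose (6 * k) (3 * k) := h
        _ ≤ (6 * k + 1) * Nat.choose (6 * k) (3 * k) :=
            Nat.mul_le_mul_right _ (by omega)
      have h3 : ((4:ℝ)) ^ (3 * k) ≤ ((6 * k + 1 : ℕ) : ℝ) * (Nat.choose (6 * k) (3 * k)) := by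
        exact_mod_cast h2
      calc (64:ℝ) ^ k = 4 ^ (3 * k) := by rw [pow_mul]; norm_num
      _ ≤ ((6 * k + 1 : ℕ) : ℝ) * (Nat.choose (6 * k) (3 * k)) := h3
      _ = (6 * (k:ℝ) + 1) * (Nat.choose (6 * k) (3 * k)) := by push_cast; ring
  have hsum : Summable (fun k : ℕ => (63 * (k : ℝ) ^ 2 + 18 * k + 2) * (1/8) ^ k) := by
    have h2 := summable_pow_mul_geometric_of_norm_lt_one (R := ℝ) 2
      (r := (1/8:ℝ)) (by rw [Real.norm_eq_abs, abs_of_nonneg (by norm_num : (0:ℝ) ≤ 1/8)]; norm_num)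
    have h1 := summable_pow_mul_geometric_of_norm_lt_one (R := ℝ) 1
      (r := (1/8:ℝ)) (by rw [Real.norm_eq_abs, abs_of_nonneg (by norm_num : (0:ℝ) ≤ 1/8)]; norm_num)
    have h0 := summable_pow_mul_geometric_of_norm_lt_one (R := ℝ) 0
      (r := (1/8:ℝ)) (by rw [Real.norm_eq_abs, abs_of_nonneg (by norm_num : (0:ℝ) ≤ 1/8)]; norm_num)
    have := ((h2.mul_left 63).add (h1.mul_left 18)).add (h0.mul_left 2)
    apply this.congr
    intro k
    push_cast
    ring
  apply Summable.of_nonneg_of_le _ _ hsum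
  · intro k
    have hC : (0:ℝ) < (Nat.choose (6 * k) (3 * k) : ℝ) := by
      exact_mod_cast Nat.choose_pos (show 3 * k ≤ 6 * k by omega)
    positivity
  · intro k
    have hM : (0:ℝ) < (6 * (k:ℝ) + 1) * (Nat.choose (6 * k) (3 * k)) := by
      have hC : (0:ℝ) < (Nat.choose (6 * k) (3 * k) : ℝ) := by
        exact_mod_cast Nat.choose_pos (show 3 * k ≤ 6 * k by omega)
      positivity
    rw [div_le_iff₀ hM]
    have hnum : (0:ℝ) ≤ (63 * (k : ℝ) ^ 2 + 18 * k + 2) * (1/8) ^ k := by positivity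
    calc (63 * (k : ℝ) ^ 2 + 18 * k + 2) * 8 ^ k
        = ((63 * (k : ℝ) ^ 2 + 18 * k + 2) * (1/8) ^ k) * 64 ^ k := by
          rw [mul_assoc, ← mul_pow]; norm_num
      _ ≤ ((63 * (k : ℝ) ^ 2 + 18 * k + 2) * (1/8) ^ k) *
            ((6 * (k:ℝ) + 1) * (Nat.choose (6 * k) (3 * k))) :=
          mul_le_mul_of_nonneg_left (hbig k) hnum

lemma pointwise {x : ℝ} (hx : x ∈ Set.Icc (0:ℝ) 1) :
    HasSum (fun k => myF k x) (myf x) := by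
  set t := 8 * (x * (1 - x)) ^ 3 with ht
  have h0 : 0 ≤ t := by
    have := hx.1; have := hx.2
    have : 0 ≤ x * (1 - x) := mul_nonneg hx.1 (by linarith [hx.2])
    positivity
  have hlt : t < 1 := by linarith [denom_pos x]
  have hnorm : ‖t‖ < 1 := by rw [Real.norm_eq_abs, abs_of_nonneg h0]; exact hlt
  have h0s := hasSum_geometric_of_norm_lt_one hnorm
  have h1s := hasSum_choose_mul_geometric_of_norm_lt_one 1 hnorm
  have h2s := hasSum_choose_mul_geometric_of_norm_lt_one 2 hnorm
  have H := ((h2s.mul_left 126).sub (h1s.mul_left 171)).add (h0s.mul_left 47)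
  convert H using 1
  · rfl
  · funext k
    show myF k x = 126 * (((k + 2).choose 2 : ℝ) * t ^ k)
        - 171 * (((k + 1).choose 1 : ℝ) * t ^ k) + 47 * t ^ k
    rw [Nat.choose_one_right, Nat.cast_choose_two]
    have htk : t ^ k = 8 ^ k * (x ^ (3 * k) * (1 - x) ^ (3 * k)) := by
      rw [ht, mul_pow, ← pow_mul, mul_pow, mul_comm 3 k]
    rw [htk, myF]
    push_cast
    ring
  · rw [myf, ← ht]
    have hne : (1 - t) ≠ 0 := by linarith [denom_pos x]
    field_simp
    ring

noncomputable def myG (x : ℝ) : ℝ :=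
  (610 * (2*x-1) - 578 * (2*x-1)^3 + 228 * (2*x-1)^5 + 28 * (2*x-1)^7
      - 38 * (2*x-1)^9 + 6 * (2*x-1)^11) /
    (2 * ((1 + (2*x-1)^2) * ((2*x-1)^4 - 4*(2*x-1)^2 + 7))^2)
  + 3 * Real.arctan (2*x-1)

lemma myG_deriv (x : ℝ) : HasDerivAt myG (myf x) x := by
  have hq : 0 < (2*x-1)^4 - 4*(2*x-1)^2 + 7 := by
    nlinarith [sq_nonneg ((2*x-1)^2 - 2)]
  have hA : 0 < 1 + (2*x-1)^2 := by positivity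
  have hDpos : 0 < 2 * ((1 + (2*x-1)^2) * ((2*x-1)^4 - 4*(2*x-1)^2 + 7))^2 :=
    mul_pos two_pos (pow_pos (mul_pos hA hq) 2)
  have hs : HasDerivAt (fun y : ℝ => 2*y-1) 2 x := by
    simpa using ((hasDerivAt_id x).const_mul 2).sub_const 1
  have hN := (((((hs.const_mul 610).sub ((hs.pow 3).const_mul 578)).add
      ((hs.pow 5).const_mul 228)).add ((hs.pow 7).const_mul 28)).sub
      ((hs.pow 9).const_mul 38)).add ((hs.pow 11).const_mul 6)
  have hW := ((hs.pow 2).const_add 1).mul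
      (((hs.pow 4).sub ((hs.pow 2).const_mul 4)).add_const 7)
  have hD := (hW.pow 2).const_mul 2
  have hArc := ((Real.hasDerivAt_arctan (2*x-1)).comp x hs).const_mul 3
  have hG := (hN.div hD hDpos.ne').add hArc
  convert hG using 1
  · rfl
  · rfl
  · rfl
  have h1 : (1 : ℝ) - 8 * (x * (1 - x)) ^ 3 ≠ 0 := (denom_pos x).ne'
  rw [myf]
  simp only [Pi.pow_apply, Pi.mul_apply, Pi.add_apply, Pi.sub_apply]
  have hd : 1 - 8 * (x * (1 - x)) ^ 3 = ((1 + (2*x-1)^2) * ((2*x-1)^4 - 4*(2*x-1)^2 + 7)) / 8 := by ring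
  have hAne := hA.ne'
  have hqne := hq.ne'
  rw [hd]
  generalize 2 * x - 1 = u at hAne hqne ⊢
  norm_num
  have hq' : u ^ 2 * (u ^ 2 - 4) + 7 ≠ 0 := by convert hqne using 1; ring
  field_simp
  ring

lemma myf_continuous : Continuous myf := by
  have hd : Continuous (fun x : ℝ => 1 - 8 * (x * (1 - x)) ^ 3) := by fun_prop
  unfold myf
  exact ((continuous_const.div hd fun x => (denom_pos x).ne').sub
    (continuous_const.div (hd.pow 2) fun x => pow_ne_zero _ (denom_pos x).ne')).add
    (continuous_const.div (hd.pow 3) fun x => pow_ne_zero _ (denom_pos x).ne')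

lemma integral_myf : ∫ x in (0:ℝ)..1, myf x = 3 * Real.pi / 2 + 4 := by
  rw [intervalIntegral.integral_eq_sub_of_hasDerivAt (fun x _ => myG_deriv x)
    (myf_continuous.intervalIntegrable 0 1)]
  rw [myG, myG]
  norm_num [Real.arctan_one, Real.arctan_neg]
  ring

theorem series_stmt_4 :
    HasSum (fun k : ℕ =>
      (63 * (k : ℝ) ^ 2 + 18 * k + 2) * 8 ^ k /
        ((6 * (k : ℝ) + 1) * (Nat.choose (6 * k) (3 * k))))
      (3 * Real.pi / 2 + 4) := by
  have hcont : ∀ k : ℕ, Continuous (myF k) := by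
    intro k; unfold myF; fun_prop
  have hInt : ∀ k : ℕ, MeasureTheory.Integrable (myF k)
      (MeasureTheory.volume.restrict (Set.Ioc (0:ℝ) 1)) :=
    fun k => (hcont k).integrableOn_Ioc
  have hnorm : ∀ k : ℕ, (∫ x in Set.Ioc (0:ℝ) 1, ‖myF k x‖)
      = (63 * (k : ℝ) ^ 2 + 18 * k + 2) * 8 ^ k /
        ((6 * (k : ℝ) + 1) * (Nat.choose (6 * k) (3 * k))) := by
    intro k
    have heq : Set.EqOn (fun x => ‖myF k x‖) (myF k) (Set.Ioc (0:ℝ) 1) := by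
      intro x hx
      have hx0 : 0 ≤ x := le_of_lt hx.1
      have hx1 : 0 ≤ 1 - x := by linarith [hx.2]
      have : 0 ≤ myF k x := by
        rw [myF]
        positivity
      exact Real.norm_of_nonneg this
    rw [MeasureTheory.setIntegral_congr_fun measurableSet_Ioc heq,
      ← intervalIntegral.integral_of_le zero_le_one, term_integral]
  have hsum' : Summable (fun k : ℕ => ∫ x in Set.Ioc (0:ℝ) 1, ‖myF k x‖) := by
    rw [funext hnorm]
    exact summable_a
  have H := MeasureTheory.hasSum_integral_of_summable_integral_norm hInt hsum'
  have h1 : (fun k : ℕ => (63 * (k : ℝ) ^ 2 + 18 * k + 2) * 8 ^ k /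
      ((6 * (k : ℝ) + 1) * (Nat.choose (6 * k) (3 * k))))
      = fun k => ∫ x in Set.Ioc (0:ℝ) 1, myF k x := by
    funext k
    rw [← intervalIntegral.integral_of_le zero_le_one, term_integral]
  have h2 : (∫ x in Set.Ioc (0:ℝ) 1, (∑' k, myF k x)) = 3 * Real.pi / 2 + 4 := by
    rw [MeasureTheory.setIntegral_congr_fun measurableSet_Ioc
      (fun x hx => (pointwise ⟨le_of_lt hx.1, hx.2⟩).tsum_eq),
      ← intervalIntegral.integral_of_le zero_le_one, integral_myf]
  rw [h1, ← h2]
  exact H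
end

section
/- The infinite series ∑_{k=0}^∞ 8^k·(63k³+90k²+35k+3) / ((2k+1)(6k+1)(6k+5)·C(6k,3k)) converges and equals 1. -/
open Nat Finset Filter Topology

noncomputable def aSeq (k : ℕ) : ℝ := 8 ^ k / ((6 * k).choose (3 * k))

lemma choose_pos' (k : ℕ) : 0 < ((6 * k).choose (3 * k)) :=
  Nat.choose_pos (by omega)

lemma fact3 (m : ℕ) : (m + 3)! = (m + 3) * ((m + 2) * ((m + 1) * m !)) := by
  rw [show m + 3 = (m + 2) + 1 by ring, Nat.factorial_succ,
    show m + 2 = (m + 1) + 1 by ring, Nat.factorial_succ, Nat.factorial_succ]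

lemma fact6 (m : ℕ) : (m + 6)! =
    (m + 1) * (m + 2) * (m + 3) * (m + 4) * (m + 5) * (m + 6) * m ! := by
  rw [show m + 6 = (m + 5) + 1 by ring, Nat.factorial_succ,
    show m + 5 = (m + 4) + 1 by ring, Nat.factorial_succ,
    show m + 4 = (m + 3) + 1 by ring, Nat.factorial_succ,
    show m + 3 = (m + 2) + 1 by ring, Nat.factorial_succ,
    show m + 2 = (m + 1) + 1 by ring, Nat.factorial_succ, Nat.factorial_succ]
  ring

lemma key_nat (k : ℕ) :
    ((6 * k + 6).choose (3 * k + 3)) * ((3 * k + 1) * (3 * k + 2) * (3 * k + 3)) ^ 2 =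
      (6 * k).choose (3 * k) *
        ((6 * k + 1) * (6 * k + 2) * (6 * k + 3) * (6 * k + 4) * (6 * k + 5) * (6 * k + 6)) := by
  have h1 := Nat.choose_mul_factorial_mul_factorial (show 3 * k ≤ 6 * k by omega)
  have h2 := Nat.choose_mul_factorial_mul_factorial (show 3 * k + 3 ≤ 6 * k + 6 by omega)
  have e1 : 6 * k - 3 * k = 3 * k := by omega
  have e2 : 6 * k + 6 - (3 * k + 3) = 3 * k + 3 := by omega
  rw [e1] at h1
  rw [e2] at h2
  have f1 := fact3 (3 * k)
  have f2 := fact6 (6 * k)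
  apply Nat.eq_of_mul_eq_mul_right
    (Nat.mul_pos (Nat.factorial_pos (3 * k)) (Nat.factorial_pos (3 * k)))
  calc ((6 * k + 6).choose (3 * k + 3)) * ((3 * k + 1) * (3 * k + 2) * (3 * k + 3)) ^ 2 *
        ((3 * k)! * (3 * k)!)
      = ((6 * k + 6).choose (3 * k + 3)) * (3 * k + 3)! * (3 * k + 3)! := by rw [f1]; ring
    _ = (6 * k + 6)! := h2
    _ = (6 * k + 1) * (6 * k + 2) * (6 * k + 3) * (6 * k + 4) * (6 * k + 5) * (6 * k + 6) *
        ((6 * k).choose (3 * k) * (3 * k)! * (3 * k)!) := by rw [h1, f2]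
    _ = (6 * k).choose (3 * k) *
        ((6 * k + 1) * (6 * k + 2) * (6 * k + 3) * (6 * k + 4) * (6 * k + 5) * (6 * k + 6)) *
        ((3 * k)! * (3 * k)!) := by ring

lemma key_real (k : ℕ) :
    ((6 * (k + 1)).choose (3 * (k + 1)) : ℝ) *
        ((3 * (k : ℝ) + 1) * (3 * k + 2) * (3 * k + 3)) ^ 2 =
      ((6 * k).choose (3 * k) : ℝ) *
        ((6 * (k : ℝ) + 1) * (6 * k + 2) * (6 * k + 3) * (6 * k + 4) * (6 * k + 5) * (6 * k + 6)) := by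
  have h := key_nat k
  rw [show 6 * (k + 1) = 6 * k + 6 by ring, show 3 * (k + 1) = 3 * k + 3 by ring]
  have h2 : (((6 * k + 6).choose (3 * k + 3) : ℕ) *
      ((3 * k + 1) * (3 * k + 2) * (3 * k + 3)) ^ 2 : ℝ) =
      (((6 * k).choose (3 * k) : ℕ) *
        ((6 * k + 1) * (6 * k + 2) * (6 * k + 3) * (6 * k + 4) * (6 * k + 5) * (6 * k + 6)) : ℝ) := by
    exact_mod_cast congrArg (Nat.cast : ℕ → ℝ) h
  push_cast at h2
  linarith [h2]

lemma cprime_eq (k : ℕ) :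
    ((6 * (k + 1)).choose (3 * (k + 1)) : ℝ) =
      ((6 * k).choose (3 * k) : ℝ) *
        ((6 * (k : ℝ) + 1) * (6 * k + 2) * (6 * k + 3) * (6 * k + 4) * (6 * k + 5) * (6 * k + 6)) /
        ((3 * (k : ℝ) + 1) * (3 * k + 2) * (3 * k + 3)) ^ 2 := by
  have hk : (0 : ℝ) ≤ (k : ℝ) := Nat.cast_nonneg k
  rw [eq_div_iff (by positivity)]
  exact key_real k

lemma term_eq (k : ℕ) :
    (8 : ℝ) ^ k * (63 * (k : ℝ) ^ 3 + 90 * k ^ 2 + 35 * k + 3) /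
        ((2 * (k : ℝ) + 1) * (6 * k + 1) * (6 * k + 5) * (Nat.choose (6 * k) (3 * k))) =
      aSeq k - aSeq (k + 1) := by
  have hc : (0 : ℝ) < ((6 * k).choose (3 * k) : ℝ) := by exact_mod_cast choose_pos' k
  have hk : (0 : ℝ) ≤ (k : ℝ) := Nat.cast_nonneg k
  unfold aSeq
  rw [cprime_eq k]
  rw [div_div_eq_mul_div]
  field_simp
  ring
theorem series_stmt_10 :
    HasSum (fun k : ℕ =>
      (8 : ℝ) ^ k * (63 * (k : ℝ) ^ 3 + 90 * k ^ 2 + 35 * k + 3) /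
        ((2 * (k : ℝ) + 1) * (6 * k + 1) * (6 * k + 5) * (Nat.choose (6 * k) (3 * k))))
      1 := by
  have hnn : ∀ i : ℕ, (0 : ℝ) ≤
      (8 : ℝ) ^ i * (63 * (i : ℝ) ^ 3 + 90 * i ^ 2 + 35 * i + 3) /
        ((2 * (i : ℝ) + 1) * (6 * i + 1) * (6 * i + 5) * (Nat.choose (6 * i) (3 * i))) := by
    intro i
    have hc : (0 : ℝ) < ((6 * i).choose (3 * i) : ℝ) := by exact_mod_cast choose_pos' i
    have hi : (0 : ℝ) ≤ (i : ℝ) := Nat.cast_nonneg i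
    positivity
  rw [hasSum_iff_tendsto_nat_of_nonneg hnn]
  have hsum : ∀ n : ℕ, ∑ i ∈ Finset.range n,
      (8 : ℝ) ^ i * (63 * (i : ℝ) ^ 3 + 90 * i ^ 2 + 35 * i + 3) /
        ((2 * (i : ℝ) + 1) * (6 * i + 1) * (6 * i + 5) * (Nat.choose (6 * i) (3 * i))) =
      aSeq 0 - aSeq n := by
    intro n
    rw [← Finset.sum_range_sub' aSeq n]
    exact Finset.sum_congr rfl fun i _ => term_eq i
  have ha0 : aSeq 0 = 1 := by simp [aSeq]
  have hbound : ∀ n, aSeq n ≤ (2 / 5 : ℝ) ^ n := by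
    intro n
    induction n with
    | zero => simp [ha0]
    | succ n ih =>
      have hc : (0 : ℝ) < ((6 * n).choose (3 * n) : ℝ) := by exact_mod_cast choose_pos' n
      have hn : (0 : ℝ) ≤ (n : ℝ) := Nat.cast_nonneg n
      have hstep : aSeq (n + 1) ≤ (2 / 5) * aSeq n := by
        have hval : aSeq (n + 1) = 8 ^ (n + 1) * ((3 * (n : ℝ) + 1) * (3 * n + 2) * (3 * n + 3)) ^ 2 /
            (((6 * n).choose (3 * n) : ℝ) *
              ((6 * (n : ℝ) + 1) * (6 * n + 2) * (6 * n + 3) * (6 * n + 4) * (6 * n + 5) * (6 * n + 6))) := by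
          unfold aSeq
          rw [cprime_eq n, div_div_eq_mul_div]
        have h8 : (0 : ℝ) < 8 ^ n := by positivity
        have h20 : 20 * ((3 * (n : ℝ) + 1) * (3 * n + 2) * (3 * n + 3)) ^ 2 ≤
            (6 * (n : ℝ) + 1) * (6 * n + 2) * (6 * n + 3) * (6 * n + 4) * (6 * n + 5) * (6 * n + 6) := by
          nlinarith [hn, mul_nonneg hn hn, mul_nonneg (mul_nonneg hn hn) hn,
            mul_nonneg (mul_nonneg (mul_nonneg hn hn) hn) hn,
            mul_nonneg (mul_nonneg (mul_nonneg (mul_nonneg hn hn) hn) hn) hn,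
            mul_nonneg (mul_nonneg (mul_nonneg (mul_nonneg (mul_nonneg hn hn) hn) hn) hn) hn]
        rw [hval, show (2 / 5 : ℝ) * aSeq n = (2 * 8 ^ n) / (5 * ((6 * n).choose (3 * n) : ℝ)) by
          unfold aSeq; ring, div_le_div_iff₀ (by positivity) (by positivity), pow_succ]
        nlinarith [mul_le_mul_of_nonneg_left h20
          (by positivity : (0:ℝ) ≤ 2 * 8 ^ n * ((6 * n).choose (3 * n) : ℝ))]
      have hpow : (0:ℝ) ≤ (2/5:ℝ) ^ n := by positivity
      calc aSeq (n + 1) ≤ (2 / 5) * aSeq n := hstep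
        _ ≤ (2 / 5) * (2 / 5) ^ n := by linarith
        _ = (2 / 5 : ℝ) ^ (n + 1) := by ring
  have hpos : ∀ n, 0 ≤ aSeq n := by
    intro n
    have hc : (0 : ℝ) < ((6 * n).choose (3 * n) : ℝ) := by exact_mod_cast choose_pos' n
    unfold aSeq
    positivity
  have hlim : Tendsto aSeq atTop (𝓝 0) := by
    have h0 : Tendsto (fun n : ℕ => (2 / 5 : ℝ) ^ n) atTop (𝓝 0) :=
      tendsto_pow_atTop_nhds_zero_of_lt_one (by norm_num) (by norm_num)
    exact squeeze_zero hpos hbound h0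
  have hT : Tendsto (fun n : ℕ => aSeq 0 - aSeq n) atTop (𝓝 (1 - 0)) := by
    rw [ha0]
    exact tendsto_const_nhds.sub hlim
  simp only [sub_zero] at hT
  exact Tendsto.congr (fun n => (hsum n).symm) hT
end
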